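/- Let G be a group and ρ: G → GL₂(ℂ) an irreducible 2-dimensional representation that is not induced from any index-2 subgroup. If ρ ≅ ρ^∨ ⊗ μ for a character μ: G → ℂˣ (where ρ^∨ is the dual), then det ρ = μ. -/

import Mathlib

open Matrix

open Classical in
/-- The extension by zero of a character `χ` of a subgroup `H` to the whole group. -/
noncomputable def extChar {G : Type*} [Group G] (H : Subgroup G) (χ : H →* ℂˣ) : G → ℂ :=
  fun g => if h : g ∈ H then (χ ⟨g, h⟩ : ℂ) else 0

/-- The standard matrix model of the representation of `G` induced from a character `χ`
of an index-two subgroup `H`, with coset representatives `1` and `s`. -/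
noncomputable def indRep {G : Type*} [Group G] (H : Subgroup G) (χ : H →* ℂˣ) (s : G) :
    G → Matrix (Fin 2) (Fin 2) ℂ :=
  fun g => Matrix.of
    ![![extChar H χ g, extChar H χ (g * s)],
      ![extChar H χ (s⁻¹ * g), extChar H χ (s⁻¹ * g * s)]]

/-- A matrix representation is irreducible if its only invariant subspaces are `⊥` and `⊤`. -/
def MatIrred {G : Type*} (n : ℕ) (ρ : G → Matrix (Fin n) (Fin n) ℂ) : Prop :=
  ∀ W : Submodule ℂ (Fin n → ℂ), (∀ g : G, ∀ v ∈ W, (ρ g).mulVec v ∈ W) → W = ⊥ ∨ W = ⊤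



private lemma aux_J_conj (M : Matrix (Fin 2) (Fin 2) ℂ) :
    Mᵀ * !![0,1;-1,0] * M = M.det • !![0,1;-1,0] := by
  ext i j
  fin_cases i <;> fin_cases j <;>
    simp [Matrix.mul_apply, Fin.sum_univ_two, Matrix.det_fin_two, Matrix.transpose_apply] <;> ring

private lemma schur2 {G : Type*} [Group G] (ρ : G →* Matrix (Fin 2) (Fin 2) ℂ)
    (hirr : MatIrred 2 (fun g => ρ g))
    (B : Matrix (Fin 2) (Fin 2) ℂ) (hB : ∀ g, B * ρ g = ρ g * B) :
    ∃ c : ℂ, B = c • (1 : Matrix (Fin 2) (Fin 2) ℂ) := by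
  obtain ⟨c, hc⟩ := Module.End.exists_eigenvalue (Matrix.toLin' B)
  obtain ⟨v, hv⟩ := hc.exists_hasEigenvector
  have hv1 : B.mulVec v = c • v := by
    have := hv.apply_eq_smul
    simpa [Matrix.toLin'_apply] using this
  refine ⟨c, ?_⟩
  set W : Submodule ℂ (Fin 2 → ℂ) :=
    { carrier := {x | B.mulVec x = c • x}
      add_mem' := by intro a b ha hb; simp only [Set.mem_setOf_eq] at *
                     rw [Matrix.mulVec_add, ha, hb, smul_add]
      zero_mem' := by simp
      smul_mem' := by intro r x hx; simp only [Set.mem_setOf_eq] at *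
                      rw [Matrix.mulVec_smul, hx, smul_comm] } with hW
  have hWinv : ∀ g : G, ∀ x ∈ W, (ρ g).mulVec x ∈ W := by
    intro g x hx
    have hx' : B.mulVec x = c • x := hx
    show B.mulVec ((ρ g).mulVec x) = c • (ρ g).mulVec x
    rw [Matrix.mulVec_mulVec, hB g, ← Matrix.mulVec_mulVec, hx', Matrix.mulVec_smul]
  rcases hirr W hWinv with h | h
  · exfalso
    have : v ∈ W := hv1
    rw [h] at this
    exact hv.2 this
  · have hall : ∀ x : Fin 2 → ℂ, B.mulVec x = c • x := by
      intro x
      have : x ∈ W := h ▸ Submodule.mem_top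
      exact this
    ext i j
    have := congrFun (hall (Pi.single j 1)) i
    simpa [Matrix.mulVec_single, Matrix.smul_apply, Pi.single_apply, Matrix.one_apply,
      eq_comm, mul_comm] using this

private lemma induced_of_anticommute {G : Type*} [Group G] (ρ : G →* Matrix (Fin 2) (Fin 2) ℂ)
    (B : Matrix (Fin 2) (Fin 2) ℂ)
    (hρmul1 : ∀ g : G, ρ g * ρ g⁻¹ = 1)
    (hρmul1' : ∀ g : G, ρ g⁻¹ * ρ g = 1)
    (hρdet : ∀ g : G, (ρ g).det ≠ 0)
    (hBB : B * B = 1)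
    (hdich : ∀ g : G, B * ρ g = ρ g * B ∨ B * ρ g = -(ρ g * B))
    (s : G) (hanti_s : B * ρ s = -(ρ s * B)) :
    ∃ (H : Subgroup G) (χ : H →* ℂˣ), s ∉ H ∧ H.index = 2 ∧
      ∃ P : Matrix (Fin 2) (Fin 2) ℂ, IsUnit P ∧ ∀ g : G, P * ρ g = indRep H χ s g * P := by
  have hBdet : B.det ≠ 0 := by
    intro h
    have := congrArg Matrix.det hBB
    rw [Matrix.det_mul, h, Matrix.det_one, mul_zero] at this
    exact zero_ne_one this
  have hnotboth : ∀ g : G, B * ρ g = -(ρ g * B) → ¬(B * ρ g = ρ g * B) := by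
    intro g h1 h2
    have h3 : ρ g * B = -(ρ g * B) := h2.symm.trans h1
    have h5 : (2:ℂ) • (ρ g * B) = 0 := by
      rw [two_smul]
      nth_rewrite 2 [h3]
      exact add_neg_cancel _
    have h4 : ρ g * B = 0 := by
      rcases smul_eq_zero.mp h5 with h | h
      · norm_num at h
      · exact h
    have h6 : (ρ g).det * B.det = 0 := by
      rw [← Matrix.det_mul, h4, Matrix.det_zero]
    exact absurd h6 (mul_ne_zero (hρdet g) hBdet)
  -- subgroup of commuting elements
  set H : Subgroup G :=
    { carrier := {g | B * ρ g = ρ g * B}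
      one_mem' := by simp [MonoidHom.map_one]
      mul_mem' := by
        intro a b ha hb
        simp only [Set.mem_setOf_eq] at *
        rw [MonoidHom.map_mul, ← mul_assoc, ha, mul_assoc, hb, mul_assoc]
      inv_mem' := by
        intro a ha
        simp only [Set.mem_setOf_eq] at *
        have h1 : ρ a⁻¹ * (B * ρ a) * ρ a⁻¹ = ρ a⁻¹ * (ρ a * B) * ρ a⁻¹ := by rw [ha]
        calc B * ρ a⁻¹ = (ρ a⁻¹ * ρ a) * B * ρ a⁻¹ := by rw [hρmul1' a, one_mul]
          _ = ρ a⁻¹ * (ρ a * B) * ρ a⁻¹ := by simp only [mul_assoc]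
          _ = ρ a⁻¹ * (B * ρ a) * ρ a⁻¹ := h1.symm
          _ = ρ a⁻¹ * B * (ρ a * ρ a⁻¹) := by simp only [mul_assoc]
          _ = ρ a⁻¹ * B := by rw [hρmul1 a, mul_one] } with hH
  have hmemH : ∀ g : G, g ∈ H ↔ B * ρ g = ρ g * B := fun g => Iff.rfl
  have hanti_mul_anti : ∀ a b : G, B * ρ a = -(ρ a * B) → B * ρ b = -(ρ b * B) → a * b ∈ H := by
    intro a b ha hb
    rw [hmemH, MonoidHom.map_mul, ← mul_assoc, ha, neg_mul, mul_assoc, hb]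
    simp only [mul_neg, neg_neg, mul_assoc]
  have hmem_mul_anti : ∀ a b : G, a ∈ H → B * ρ b = -(ρ b * B) → B * ρ (a*b) = -(ρ (a*b) * B) := by
    intro a b ha hb
    rw [hmemH] at ha
    rw [MonoidHom.map_mul, ← mul_assoc, ha, mul_assoc, hb]
    simp only [mul_neg, neg_mul, mul_assoc]
  have hanti_mul_mem : ∀ a b : G, B * ρ a = -(ρ a * B) → b ∈ H → B * ρ (a*b) = -(ρ (a*b) * B) := by
    intro a b ha hb
    rw [hmemH] at hb
    rw [MonoidHom.map_mul, ← mul_assoc, ha, neg_mul, mul_assoc, hb]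
    simp only [mul_neg, neg_mul, mul_assoc]
  have hanti_inv : ∀ a : G, B * ρ a = -(ρ a * B) → B * ρ a⁻¹ = -(ρ a⁻¹ * B) := by
    intro a ha
    have h1 : ρ a⁻¹ * (B * ρ a) * ρ a⁻¹ = ρ a⁻¹ * (-(ρ a * B)) * ρ a⁻¹ := by rw [ha]
    calc B * ρ a⁻¹ = (ρ a⁻¹ * ρ a) * B * ρ a⁻¹ := by rw [hρmul1' a, one_mul]
      _ = ρ a⁻¹ * (ρ a * B) * ρ a⁻¹ := by simp only [mul_assoc]
      _ = -(ρ a⁻¹ * (B * ρ a) * ρ a⁻¹) := by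
          rw [ha]; simp only [mul_neg, neg_mul, neg_neg]
      _ = -(ρ a⁻¹ * B * (ρ a * ρ a⁻¹)) := by simp only [mul_assoc]
      _ = -(ρ a⁻¹ * B) := by rw [hρmul1 a, mul_one]
  have hsH : s ∉ H := fun h => hnotboth s hanti_s h
  have hnotmem_anti : ∀ g : G, g ∉ H → B * ρ g = -(ρ g * B) := by
    intro g hg
    rcases hdich g with h | h
    · exact absurd h hg
    · exact h
  have hindex : H.index = 2 := by
    rw [Subgroup.index_eq_two_iff]
    refine ⟨s, fun b => ?_⟩
    rcases hdich b with hb | hb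
    · exact Or.inr ⟨hb, hnotboth _ (hmem_mul_anti b s hb hanti_s)⟩
    · exact Or.inl ⟨hanti_mul_anti b s hb hanti_s, hnotboth _ hb⟩
  -- B is not ±1
  have hBne1 : B ≠ 1 := by
    intro h
    apply hnotboth s hanti_s
    rw [h, one_mul, mul_one]
  have hBne1' : B ≠ -1 := by
    intro h
    apply hnotboth s hanti_s
    rw [h]
    simp only [neg_mul, mul_neg, one_mul, mul_one]
  -- eigenvector for eigenvalue 1
  have hfac : (B - 1) * (B + 1) = 0 := by
    have h : (B - 1) * (B + 1) = B * B - 1 := by noncomm_ring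
    rw [h, hBB, sub_self]
  have hdet0 : (B - 1).det = 0 := by
    by_contra h
    have hu : IsUnit (B - 1).det := isUnit_iff_ne_zero.mpr h
    have h1 : (B - 1)⁻¹ * ((B - 1) * (B + 1)) = 0 := by rw [hfac, mul_zero]
    rw [← mul_assoc, Matrix.nonsing_inv_mul _ hu, one_mul] at h1
    have : B = -1 := by
      have := congrArg (fun M => M - 1) h1
      simpa [add_sub_cancel_right, sub_eq_neg_self] using eq_neg_of_add_eq_zero_left h1
    exact hBne1' this
  obtain ⟨v, hv0, hv⟩ := (Matrix.exists_mulVec_eq_zero_iff).mpr hdet0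
  have hvB : B.mulVec v = v := by
    have h := hv
    rw [Matrix.sub_mulVec, Matrix.one_mulVec, sub_eq_zero] at h
    exact h
  set u : Fin 2 → ℂ := (ρ s).mulVec v with hu_def
  have hu0 : u ≠ 0 := by
    intro h
    apply hv0
    have : (ρ s⁻¹).mulVec u = v := by
      rw [hu_def, Matrix.mulVec_mulVec, hρmul1' s, Matrix.one_mulVec]
    rw [h, Matrix.mulVec_zero] at this
    exact this.symm
  have huB : B.mulVec u = -u := by
    rw [hu_def, Matrix.mulVec_mulVec, hanti_s, Matrix.neg_mulVec, ← Matrix.mulVec_mulVec, hvB]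
  set Q : Matrix (Fin 2) (Fin 2) ℂ := Matrix.of ![![v 0, u 0], ![v 1, u 1]] with hQdef
  have hQmv : ∀ x : Fin 2 → ℂ, Q.mulVec x = fun i => x 0 * v i + x 1 * u i := by
    intro x
    funext i
    fin_cases i <;>
      simp [hQdef, Matrix.mulVec, dotProduct, Fin.sum_univ_two] <;> ring
  have hvB' : ∀ i, B i 0 * v 0 + B i 1 * v 1 = v i := by
    intro i
    have h := congrFun hvB i
    simpa [Matrix.mulVec, dotProduct, Fin.sum_univ_two] using h
  have huB' : ∀ i, B i 0 * u 0 + B i 1 * u 1 = -u i := by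
    intro i
    have h := congrFun huB i
    simpa [Matrix.mulVec, dotProduct, Fin.sum_univ_two] using h
  have hQdet : Q.det ≠ 0 := by
    intro hdet
    obtain ⟨x, hx0, hx⟩ := (Matrix.exists_mulVec_eq_zero_iff).mpr hdet
    have h1 : ∀ i, x 0 * v i + x 1 * u i = 0 := by
      intro i
      have := congrFun hx i
      rwa [hQmv x] at this
    have h2 : ∀ i, x 0 * v i - x 1 * u i = 0 := by
      intro i
      have hB1 := congrFun (congrArg B.mulVec hx) i
      rw [Matrix.mulVec_zero] at hB1
      have hcalc : B.mulVec (Q.mulVec x) = fun j => x 0 * v j - x 1 * u j := by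
        rw [hQmv x]
        funext j
        have e : (fun i => x 0 * v i + x 1 * u i) = (x 0 • v + x 1 • u : Fin 2 → ℂ) := by
          funext k; simp [Pi.add_apply, Pi.smul_apply, smul_eq_mul]
        rw [e, Matrix.mulVec_add, Matrix.mulVec_smul, Matrix.mulVec_smul, hvB, huB]
        simp [smul_eq_mul]
        ring
      rw [hcalc] at hB1
      exact hB1
    have hx00 : x 0 = 0 := by
      by_contra hxx
      apply hv0
      funext i
      have hsum : x 0 * v i = 0 := by linear_combination (h1 i + h2 i) / 2
      simpa using (mul_eq_zero.mp hsum).resolve_left hxx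
    have hx11 : x 1 = 0 := by
      by_contra hxx
      apply hu0
      funext i
      have hsum : x 1 * u i = 0 := by linear_combination (h1 i - h2 i) / 2
      simpa using (mul_eq_zero.mp hsum).resolve_left hxx
    apply hx0
    funext i
    fin_cases i
    · exact hx00
    · exact hx11
  have hQu : IsUnit Q.det := isUnit_iff_ne_zero.mpr hQdet
  have hQQ : Q * Q⁻¹ = 1 := Matrix.mul_nonsing_inv Q hQu
  have hQQ' : Q⁻¹ * Q = 1 := Matrix.nonsing_inv_mul Q hQu
  set σ : G → Matrix (Fin 2) (Fin 2) ℂ := fun g => Q⁻¹ * ρ g * Q with hσdef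
  have hσmul : ∀ a b : G, σ (a * b) = σ a * σ b := by
    intro a b
    show Q⁻¹ * ρ (a*b) * Q = (Q⁻¹ * ρ a * Q) * (Q⁻¹ * ρ b * Q)
    rw [MonoidHom.map_mul]
    calc Q⁻¹ * (ρ a * ρ b) * Q = Q⁻¹ * ρ a * ((Q * Q⁻¹) * (ρ b * Q)) := by
          rw [hQQ, one_mul]; simp only [mul_assoc]
      _ = (Q⁻¹ * ρ a * Q) * (Q⁻¹ * ρ b * Q) := by simp only [mul_assoc]
  -- D := diag(1,-1); B*Q = Q*D
  set D : Matrix (Fin 2) (Fin 2) ℂ := !![1,0;0,-1] with hDdef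
  have hBQ : B * Q = Q * D := by
    ext i j
    fin_cases i <;> fin_cases j <;>
      simp [hQdef, hDdef, Matrix.mul_apply, Fin.sum_univ_two] <;>
      first
        | linear_combination hvB' 0
        | linear_combination huB' 0
        | linear_combination hvB' 1
        | linear_combination huB' 1
  have hQB : Q⁻¹ * B = D * Q⁻¹ := by
    calc Q⁻¹ * B = Q⁻¹ * B * (Q * Q⁻¹) := by rw [hQQ, mul_one]
      _ = Q⁻¹ * (B * Q) * Q⁻¹ := by simp only [mul_assoc]
      _ = Q⁻¹ * (Q * D) * Q⁻¹ := by rw [hBQ]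
      _ = (Q⁻¹ * Q) * (D * Q⁻¹) := by simp only [mul_assoc]
      _ = D * Q⁻¹ := by rw [hQQ', one_mul]
  have hDσ_comm : ∀ g : G, B * ρ g = ρ g * B → D * σ g = σ g * D := by
    intro g hg
    have e1 : D * σ g = Q⁻¹ * (B * ρ g) * Q := by
      show D * (Q⁻¹ * ρ g * Q) = _
      calc D * (Q⁻¹ * ρ g * Q) = (D * Q⁻¹) * (ρ g * Q) := by simp only [mul_assoc]
        _ = (Q⁻¹ * B) * (ρ g * Q) := by rw [hQB]
        _ = Q⁻¹ * (B * ρ g) * Q := by simp only [mul_assoc]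
    have e2 : σ g * D = Q⁻¹ * (ρ g * B) * Q := by
      show (Q⁻¹ * ρ g * Q) * D = _
      calc (Q⁻¹ * ρ g * Q) * D = Q⁻¹ * (ρ g * (Q * D)) := by simp only [mul_assoc]
        _ = Q⁻¹ * (ρ g * (B * Q)) := by rw [hBQ]
        _ = Q⁻¹ * (ρ g * B) * Q := by simp only [mul_assoc]
    rw [e1, e2, hg]
  have hDσ_anti : ∀ g : G, B * ρ g = -(ρ g * B) → D * σ g = -(σ g * D) := by
    intro g hg
    have e1 : D * σ g = Q⁻¹ * (B * ρ g) * Q := by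
      show D * (Q⁻¹ * ρ g * Q) = _
      calc D * (Q⁻¹ * ρ g * Q) = (D * Q⁻¹) * (ρ g * Q) := by simp only [mul_assoc]
        _ = (Q⁻¹ * B) * (ρ g * Q) := by rw [hQB]
        _ = Q⁻¹ * (B * ρ g) * Q := by simp only [mul_assoc]
    have e2 : σ g * D = Q⁻¹ * (ρ g * B) * Q := by
      show (Q⁻¹ * ρ g * Q) * D = _
      calc (Q⁻¹ * ρ g * Q) * D = Q⁻¹ * (ρ g * (Q * D)) := by simp only [mul_assoc]
        _ = Q⁻¹ * (ρ g * (B * Q)) := by rw [hBQ]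
        _ = Q⁻¹ * (ρ g * B) * Q := by simp only [mul_assoc]
    rw [e1, e2, hg]
    simp only [mul_neg, neg_mul]
  have hdiag : ∀ g : G, g ∈ H → σ g 0 1 = 0 ∧ σ g 1 0 = 0 := by
    intro g hg
    have h := hDσ_comm g ((hmemH g).mp hg)
    constructor
    · have h2 := congrArg (fun M => M 0 1) h
      simp only [hDdef, Matrix.mul_apply, Fin.sum_univ_two, Matrix.of_apply,
        Matrix.cons_val', Matrix.cons_val_zero, Matrix.cons_val_one, Matrix.head_cons,
        Matrix.head_fin_const, Matrix.empty_val', Matrix.cons_val_fin_one] at h2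
      linear_combination h2 / 2
    · have h2 := congrArg (fun M => M 1 0) h
      simp only [hDdef, Matrix.mul_apply, Fin.sum_univ_two, Matrix.of_apply,
        Matrix.cons_val', Matrix.cons_val_zero, Matrix.cons_val_one, Matrix.head_cons,
        Matrix.head_fin_const, Matrix.empty_val', Matrix.cons_val_fin_one] at h2
      linear_combination -h2 / 2
  have hantidiag : ∀ g : G, B * ρ g = -(ρ g * B) → σ g 0 0 = 0 ∧ σ g 1 1 = 0 := by
    intro g hg
    have h := hDσ_anti g hg
    constructor
    · have h2 := congrArg (fun M => M 0 0) h
      simp only [hDdef, Matrix.mul_apply, Fin.sum_univ_two, Matrix.of_apply, Matrix.neg_apply,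
        Matrix.cons_val', Matrix.cons_val_zero, Matrix.cons_val_one, Matrix.head_cons,
        Matrix.head_fin_const, Matrix.empty_val', Matrix.cons_val_fin_one] at h2
      linear_combination h2 / 2
    · have h2 := congrArg (fun M => M 1 1) h
      simp only [hDdef, Matrix.mul_apply, Fin.sum_univ_two, Matrix.of_apply, Matrix.neg_apply,
        Matrix.cons_val', Matrix.cons_val_zero, Matrix.cons_val_one, Matrix.head_cons,
        Matrix.head_fin_const, Matrix.empty_val', Matrix.cons_val_fin_one] at h2
      linear_combination -h2 / 2
  -- σ s has (1,0) entry 1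
  have hQmv10 : Q.mulVec ![1,0] = v := by
    rw [hQmv]; funext i; simp
  have hQmv01 : Q.mulVec ![0,1] = u := by
    rw [hQmv]; funext i; simp
  have hσs_col : (σ s).mulVec ![1,0] = ![0,1] := by
    show (Q⁻¹ * ρ s * Q).mulVec ![1,0] = ![0,1]
    rw [← Matrix.mulVec_mulVec, ← Matrix.mulVec_mulVec, hQmv10, ← hu_def]
    rw [← hQmv01, Matrix.mulVec_mulVec, hQQ', Matrix.one_mulVec]
  have hσs10 : σ s 1 0 = 1 := by
    have h := congrFun hσs_col 1
    simpa [Matrix.mulVec, dotProduct, Fin.sum_univ_two] using h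
  have hσs11 : σ s 1 1 = 0 := (hantidiag s hanti_s).2
  have hσs00 : σ s 0 0 = 0 := (hantidiag s hanti_s).1
  -- the character
  have hχex : ∃ χ : ↥H →* ℂˣ, ∀ (g : G) (hg : g ∈ H), (χ ⟨g, hg⟩ : ℂ) = σ g 0 0 := by
    refine ⟨MonoidHom.toHomUnits
      { toFun := fun h => σ (h : G) 0 0
        map_one' := ?_
        map_mul' := ?_ }, ?_⟩
    · show σ (1 : G) 0 0 = 1
      show (Q⁻¹ * ρ (1:G) * Q) 0 0 = 1
      rw [MonoidHom.map_one, mul_one, hQQ']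
      simp [Matrix.one_apply]
    · intro a b
      show σ ((a : G) * (b : G)) 0 0 = σ (a : G) 0 0 * σ (b : G) 0 0
      rw [hσmul]
      have ha01 : σ (a : G) 0 1 = 0 := (hdiag _ a.2).1
      simp [Matrix.mul_apply, Fin.sum_univ_two, ha01]
    · intro g hg
      rfl
  obtain ⟨χ, hχ⟩ := hχex
  refine ⟨H, χ, hsH, hindex, Q⁻¹, ?_, fun g => ?_⟩
  · exact Matrix.isUnit_nonsing_inv_iff.mpr ((Matrix.isUnit_iff_isUnit_det _).mpr hQu)
  · -- goal : Q⁻¹ * ρ g = indRep H χ s g * Q⁻¹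
    have hmain : indRep H χ s g = σ g := by
      by_cases hg : g ∈ H
      · have hgs : ¬ (g * s ∈ H) := hnotboth _ (hmem_mul_anti g s hg hanti_s)
        have hsg : ¬ (s⁻¹ * g ∈ H) := hnotboth _ (hanti_mul_mem s⁻¹ g (hanti_inv s hanti_s) hg)
        have hsgs : s⁻¹ * g * s ∈ H :=
          hanti_mul_anti (s⁻¹ * g) s (hanti_mul_mem s⁻¹ g (hanti_inv s hanti_s) hg) hanti_s
        have hprod : σ s * σ (s⁻¹ * g * s) = σ g * σ s := by
          rw [← hσmul, ← hσmul]
          congr 1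
          group
        have h11 : σ g 1 1 = σ (s⁻¹ * g * s) 0 0 := by
          have h2 := congrArg (fun M => M 1 0) hprod
          simp only [Matrix.mul_apply, Fin.sum_univ_two] at h2
          rw [hσs10, hσs11, (hdiag _ hsgs).2, (hdiag _ hg).2] at h2
          linear_combination -h2
        ext i j
        fin_cases i <;> fin_cases j <;>
          simp [indRep, extChar, hg, hgs, hsg, hsgs, hχ, (hdiag _ hg).1, (hdiag _ hg).2, h11]
      · have hanti_g : B * ρ g = -(ρ g * B) := hnotmem_anti g hg
        have hgs : g * s ∈ H := hanti_mul_anti g s hanti_g hanti_s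
        have hsg : s⁻¹ * g ∈ H := hanti_mul_anti s⁻¹ g (hanti_inv s hanti_s) hanti_g
        have hsgs : ¬ (s⁻¹ * g * s ∈ H) := hnotboth _ (hmem_mul_anti (s⁻¹ * g) s hsg hanti_s)
        have h01 : σ g 0 1 = σ (g * s) 0 0 := by
          have h2 := congrArg (fun M => M 0 0) (hσmul g s)
          simp only [Matrix.mul_apply, Fin.sum_univ_two] at h2
          rw [hσs10, hσs00, (hantidiag _ hanti_g).1] at h2
          linear_combination -h2
        have h10 : σ g 1 0 = σ (s⁻¹ * g) 0 0 := by
          have e : σ g = σ s * σ (s⁻¹ * g) := by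
            rw [← hσmul]
            congr 1
            group
          have h2 := congrArg (fun M => M 1 0) e
          simp only [Matrix.mul_apply, Fin.sum_univ_two] at h2
          rw [hσs10, hσs11, (hdiag _ hsg).2] at h2
          linear_combination h2
        ext i j
        fin_cases i <;> fin_cases j <;>
          simp [indRep, extChar, hg, hgs, hsg, hsgs, hχ, (hantidiag _ hanti_g).1,
            (hantidiag _ hanti_g).2, h01, h10]
    rw [hmain]
    show Q⁻¹ * ρ g = Q⁻¹ * ρ g * Q * Q⁻¹
    rw [mul_assoc, hQQ, mul_one]


/-- If `ρ : G → GL₂(ℂ)` is irreducible, not induced from any index-two subgroup, and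
`ρ ≅ ρ^∨ ⊗ μ` for a character `μ`, then `det ρ = μ`. -/
theorem det_eq_similitude_of_not_induced {G : Type*} [Group G]
    (ρ : G →* Matrix (Fin 2) (Fin 2) ℂ) (μ : G →* ℂˣ)
    (hirr : MatIrred 2 (fun g => ρ g))
    (hni : ¬ ∃ (H : Subgroup G) (χ : H →* ℂˣ) (s : G), s ∉ H ∧ H.index = 2 ∧
      ∃ P : Matrix (Fin 2) (Fin 2) ℂ, IsUnit P ∧ ∀ g : G, P * ρ g = indRep H χ s g * P)
    (hdual : ∃ P : Matrix (Fin 2) (Fin 2) ℂ, IsUnit P ∧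
      ∀ g : G, P * ρ g = ((μ g : ℂ) • (ρ g⁻¹)ᵀ) * P) :
    ∀ g : G, (ρ g).det = (μ g : ℂ) := by
  obtain ⟨P, hP, hrel⟩ := hdual
  set J : Matrix (Fin 2) (Fin 2) ℂ := !![0,1;-1,0] with hJ
  have hJJ : (-J) * J = 1 := by
    ext i j
    fin_cases i <;> fin_cases j <;>
      simp [hJ, Matrix.mul_apply, Fin.sum_univ_two, Matrix.one_apply]
  have hJJ' : J * (-J) = 1 := by
    ext i j
    fin_cases i <;> fin_cases j <;>
      simp [hJ, Matrix.mul_apply, Fin.sum_univ_two, Matrix.one_apply]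
  have hρmul1 : ∀ g : G, ρ g * ρ g⁻¹ = 1 := by
    intro g; rw [← MonoidHom.map_mul, mul_inv_cancel, MonoidHom.map_one]
  have hρmul1' : ∀ g : G, ρ g⁻¹ * ρ g = 1 := by
    intro g; rw [← MonoidHom.map_mul, inv_mul_cancel, MonoidHom.map_one]
  have hdetinv : ∀ g : G, (ρ g).det * (ρ g⁻¹).det = 1 := by
    intro g; rw [← Matrix.det_mul, hρmul1 g, Matrix.det_one]
  have hρdet : ∀ g : G, (ρ g).det ≠ 0 := fun g =>
    left_ne_zero_of_mul_eq_one (hdetinv g)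
  have hρu : ∀ g : G, IsUnit (ρ g) := fun g =>
    (Matrix.isUnit_iff_isUnit_det _).mpr (isUnit_iff_ne_zero.mpr (hρdet g))
  set ε : G → ℂ := fun g => (μ g : ℂ) * (ρ g⁻¹).det with hε
  set A : Matrix (Fin 2) (Fin 2) ℂ := (-J) * P with hA
  have hAdet : A.det ≠ 0 := by
    rw [hA, Matrix.det_mul]
    have h1 : (-J).det ≠ 0 := by
      rw [hJ]; norm_num [Matrix.det_fin_two]
    exact mul_ne_zero h1 ((Matrix.isUnit_iff_isUnit_det _).mp hP).ne_zero
  have hAu : IsUnit A :=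
    (Matrix.isUnit_iff_isUnit_det _).mpr (isUnit_iff_ne_zero.mpr hAdet)
  have key : ∀ g : G, A * ρ g = ε g • (ρ g * A) := by
    intro g
    have hid : (ρ g⁻¹)ᵀ * J * (ρ g⁻¹) = (ρ g⁻¹).det • J := aux_J_conj (ρ g⁻¹)
    have h1 : (ρ g⁻¹)ᵀ * J = (ρ g⁻¹).det • (J * ρ g) := by
      have h := congrArg (· * ρ g) hid
      simp only [smul_mul_assoc] at h
      rw [mul_assoc, mul_assoc] at h
      rw [hρmul1' g, mul_one] at h
      exact h
    have h2 : (ρ g⁻¹)ᵀ = (ρ g⁻¹).det • (J * ρ g * (-J)) := by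
      calc (ρ g⁻¹)ᵀ = (ρ g⁻¹)ᵀ * (J * (-J)) := by rw [hJJ', mul_one]
        _ = ((ρ g⁻¹)ᵀ * J) * (-J) := by rw [mul_assoc]
        _ = (ρ g⁻¹).det • (J * ρ g * (-J)) := by rw [h1, smul_mul_assoc]
    have h3 : P * ρ g = ((μ g : ℂ) * (ρ g⁻¹).det) • (J * ρ g * ((-J) * P)) := by
      rw [hrel g, h2]
      simp only [smul_smul, smul_mul_assoc, mul_assoc]
    calc A * ρ g = (-J) * (P * ρ g) := by rw [hA, mul_assoc]
      _ = ((μ g : ℂ) * (ρ g⁻¹).det) • ((-J) * (J * ρ g * ((-J) * P))) := by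
          rw [h3, Matrix.mul_smul]
      _ = ε g • (ρ g * A) := by
          rw [hε, hA]
          congr 1
          rw [show (-J) * (J * ρ g * ((-J) * P)) = ((-J) * J) * (ρ g * ((-J) * P)) by
            simp only [mul_assoc], hJJ, one_mul, ← mul_assoc]
  have hεdone : ∀ g : G, ε g = 1 → (ρ g).det = (μ g : ℂ) := by
    intro g h
    rw [hε] at h
    simp only at h
    linear_combination (μ g : ℂ) * hdetinv g - (ρ g).det * h
  clear_value ε A
  clear hε hA hrel
  have hε2 : ∀ g : G, ε g * ε g = 1 := by
    intro g
    have h := congrArg Matrix.det (key g)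
    simp only [Matrix.det_mul, Matrix.det_smul, Fintype.card_fin] at h
    have h2 : (ε g * ε g - 1) * ((ρ g).det * A.det) = 0 := by
      linear_combination -h
    rcases mul_eq_zero.mp h2 with h3 | h3
    · linear_combination h3
    · exact absurd h3 (mul_ne_zero (hρdet g) hAdet)
  -- Schur: A * A is scalar
  have hcommAA : ∀ g : G, (A * A) * ρ g = ρ g * (A * A) := by
    intro g
    rw [mul_assoc, key g, Matrix.mul_smul, ← mul_assoc, key g, Matrix.smul_mul, smul_smul,
      hε2 g, one_smul, mul_assoc]
  obtain ⟨c, hc⟩ := schur2 ρ hirr (A * A) hcommAA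
  have hc0 : c ≠ 0 := by
    intro h
    have hd := congrArg Matrix.det hc
    rw [h, zero_smul, Matrix.det_mul, Matrix.det_zero] at hd
    exact mul_ne_zero hAdet hAdet hd
  obtain ⟨r, hr⟩ := IsAlgClosed.exists_pow_nat_eq c (n := 2) (by norm_num)
  have hr0 : r ≠ 0 := by
    intro h
    apply hc0
    rw [← hr, h]
    norm_num
  set B : Matrix (Fin 2) (Fin 2) ℂ := r⁻¹ • A with hBdef
  have hBB : B * B = 1 := by
    rw [hBdef, Matrix.smul_mul, Matrix.mul_smul, smul_smul, hc, smul_smul]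
    have hone : r⁻¹ * r⁻¹ * c = 1 := by
      rw [← hr, pow_two]
      field_simp
    rw [hone, one_smul]
  have keyB : ∀ g : G, B * ρ g = ε g • (ρ g * B) := by
    intro g
    simp only [hBdef, Matrix.smul_mul, Matrix.mul_smul, key g]
    rw [smul_comm]
  have hdich : ∀ g : G, B * ρ g = ρ g * B ∨ B * ρ g = -(ρ g * B) := by
    intro g
    rcases mul_self_eq_one_iff.mp (hε2 g) with h | h
    · left; rw [keyB g, h, one_smul]
    · right; rw [keyB g, h, neg_smul, one_smul]
  intro g0
  rcases mul_self_eq_one_iff.mp (hε2 g0) with h | h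
  · exact hεdone g0 h
  · exfalso
    apply hni
    have hanti : B * ρ g0 = -(ρ g0 * B) := by rw [keyB g0, h, neg_smul, one_smul]
    obtain ⟨H, χ, hsH, hindex, P', hP', hrel'⟩ :=
      induced_of_anticommute ρ B hρmul1 hρmul1' hρdet hBB hdich g0 hanti
    exact ⟨H, χ, g0, hsH, hindex, P', hP', hrel'⟩
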